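/- Let F be a field, let l ≥ 1, and for 1 ≤ i ≤ l let A_i be a square superregular matrix over F of size n_i × n_i; let B be an invertible n×n matrix over F. Then the iterated Kronecker product M = A_1 ⊗ (A_2 ⊗ (⋯ ⊗ (A_l ⊗ B))) is a square matrix of size Nn × Nn, where N = n_1·n_2·⋯·n_l, and M is block superregular with block size (Nn)/n_1 = n_2·⋯·n_l·n; that is, viewing M as an n_1 × n_1 array of ((Nn)/n_1)×((Nn)/n_1) blocks, every square submatrix of M consisting of full blocks is non-singular. -/

import Mathlib

/-- A matrix over a field is superregular if every square submatrix is non-singular. -/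
def IsSuperregular {F : Type*} [Field F] {I J : Type*} (A : Matrix I J F) : Prop :=
  ∀ (k : ℕ), 1 ≤ k → ∀ (r : Fin k → I) (c : Fin k → J),
    Function.Injective r → Function.Injective c →
    (Matrix.of fun i j => A (r i) (c j)).det ≠ 0

/-- A matrix made of an `m × t` array of blocks (the block index ranging over a finite type `β`)
is block superregular if every square submatrix consisting of full blocks is non-singular. -/
def IsBlockSuperregular {F : Type*} [Field F] {m t : ℕ} {β : Type*} [Fintype β]
    [DecidableEq β] (A : Matrix (Fin m × β) (Fin t × β) F) : Prop :=
  ∀ (k : ℕ), 1 ≤ k → ∀ (r : Fin k → Fin m) (c : Fin k → Fin t),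
    Function.Injective r → Function.Injective c →
    (Matrix.of fun (i j : Fin k × β) => A (r i.1, i.2) (c j.1, j.2)).det ≠ 0

/-- The index type of the iterated Kronecker product
`A 0 ⊗ (A 1 ⊗ (⋯ ⊗ (A (l-1) ⊗ B)))`, where `A i` has size `d i × d i` and `B` has
size `nb × nb`. -/
def KronIndex : (l : ℕ) → (Fin l → ℕ) → ℕ → Type
  | 0, _, nb => Fin nb
  | l + 1, d, nb => Fin (d 0) × KronIndex l (fun i => d i.succ) nb

instance instFintypeKronIndex : ∀ (l : ℕ) (d : Fin l → ℕ) (nb : ℕ),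
    Fintype (KronIndex l d nb)
  | 0, _, nb => inferInstanceAs (Fintype (Fin nb))
  | l + 1, d, nb =>
    letI := instFintypeKronIndex l (fun i => d i.succ) nb
    inferInstanceAs (Fintype (Fin (d 0) × KronIndex l (fun i => d i.succ) nb))

instance instDecidableEqKronIndex : ∀ (l : ℕ) (d : Fin l → ℕ) (nb : ℕ),
    DecidableEq (KronIndex l d nb)
  | 0, _, nb => inferInstanceAs (DecidableEq (Fin nb))
  | l + 1, d, nb =>
    letI := instDecidableEqKronIndex l (fun i => d i.succ) nb
    inferInstanceAs (DecidableEq (Fin (d 0) × KronIndex l (fun i => d i.succ) nb))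

/-- The iterated Kronecker product `A 0 ⊗ (A 1 ⊗ (⋯ ⊗ (A (l-1) ⊗ B)))`. -/
def iterKron {F : Type*} [Field F] {nb : ℕ} (B : Matrix (Fin nb) (Fin nb) F) :
    (l : ℕ) → (d : Fin l → ℕ) → (∀ i, Matrix (Fin (d i)) (Fin (d i)) F) →
      Matrix (KronIndex l d nb) (KronIndex l d nb) F
  | 0, _, _ => B
  | l + 1, d, A =>
    Matrix.kroneckerMap (· * ·) (A 0)
      (iterKron B l (fun i => d i.succ) (fun i => A i.succ))


lemma card_kronIndex : ∀ (l : ℕ) (d : Fin l → ℕ) (nb : ℕ),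
    Fintype.card (KronIndex l d nb) = (∏ i, d i) * nb
  | 0, _, nb => by rw [Fin.prod_univ_zero, one_mul]; exact Fintype.card_fin nb
  | l + 1, d, nb => by
    show Fintype.card (Fin (d 0) × KronIndex l (fun i => d i.succ) nb) = _
    rw [Fintype.card_prod, Fintype.card_fin, card_kronIndex l, Fin.prod_univ_succ, mul_assoc]

lemma det_ne_zero_of_superregular {F : Type*} [Field F] {m : ℕ}
    {A : Matrix (Fin m) (Fin m) F} (h : IsSuperregular A) : A.det ≠ 0 := by
  rcases Nat.eq_zero_or_pos m with hm | hm
  · subst hm; simp [Matrix.det_isEmpty]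
  · exact h m hm id id Function.injective_id Function.injective_id

lemma det_iterKron_ne_zero {F : Type*} [Field F] {nb : ℕ}
    {B : Matrix (Fin nb) (Fin nb) F} (hB : B.det ≠ 0) :
    ∀ (l : ℕ) (d : Fin l → ℕ) (A : ∀ i, Matrix (Fin (d i)) (Fin (d i)) F),
      (∀ i, (A i).det ≠ 0) → (iterKron B l d A).det ≠ 0
  | 0, _, _, _ => hB
  | l + 1, d, A, hA => by
    show (Matrix.kroneckerMap (· * ·) (A 0) _).det ≠ 0
    erw [Matrix.det_kronecker]
    exact mul_ne_zero (pow_ne_zero _ (hA 0))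
      (pow_ne_zero _ (det_iterKron_ne_zero hB l _ _ fun i => hA i.succ))

/-- Theorem: if `A 0, …, A l` are square superregular matrices of sizes
`n_1, …, n_{l+1}` and `B` is an invertible `n × n` matrix, then the iterated Kronecker
product `M = A 0 ⊗ (A 1 ⊗ (⋯ ⊗ (A l ⊗ B)))` is a square matrix of size `Nn × Nn`
(`N = n_1 ⋯ n_{l+1}`) which is block superregular with blocks of size
`Nn / n_1 = n_2 ⋯ n_{l+1} ⋅ n`. -/
theorem iterKron_isBlockSuperregular {F : Type*} [Field F] {l : ℕ}
    (d : Fin (l + 1) → ℕ) (A : ∀ i, Matrix (Fin (d i)) (Fin (d i)) F)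
    {n : ℕ} (B : Matrix (Fin n) (Fin n) F)
    (hA : ∀ i, IsSuperregular (A i)) (hB : IsUnit B) :
    Fintype.card (KronIndex (l + 1) d n) = (∏ i, d i) * n ∧
    Fintype.card (KronIndex l (fun i => d i.succ) n) = (∏ i : Fin l, d i.succ) * n ∧
    IsBlockSuperregular (iterKron B (l + 1) d A) := by
  have hBdet : B.det ≠ 0 := ((Matrix.isUnit_iff_isUnit_det B).mp hB).ne_zero
  refine ⟨card_kronIndex _ _ _, card_kronIndex _ _ _, ?_⟩
  intro k hk r c hr hc
  have hM' : (iterKron B l (fun i => d i.succ) (fun i => A i.succ)).det ≠ 0 :=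
    det_iterKron_ne_zero hBdet l _ _ fun i => det_ne_zero_of_superregular (hA i.succ)
  have heq : (Matrix.of fun (i j : Fin k × KronIndex l (fun i => d i.succ) n) =>
      (iterKron B (l + 1) d A) (r i.1, i.2) (c j.1, j.2)) =
      Matrix.kroneckerMap (· * ·) (Matrix.of fun i j => A 0 (r i) (c j))
        (iterKron B l (fun i => d i.succ) (fun i => A i.succ)) := rfl
  rw [heq, Matrix.det_kronecker]
  exact mul_ne_zero (pow_ne_zero _ (hA 0 k hk r c hr hc)) (pow_ne_zero _ hM')
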